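/- There exist constants c₁, c₂ > 0 such that for every n ≥ 2, c₁·√n·log n ≤ sup{ ‖x‖_{Z_2^n} / ‖x‖_∞ : x ∈ ℝⁿ×ℝⁿ, x ≠ 0 } ≤ c₂·√n·log n; that is, the operator norm of the identity map from ℓ_∞^{2n} to Z_2^n is of order √n·log n. -/

import Mathlib

open scoped BigOperators

/-- The Euclidean norm on `ℝⁿ`. -/
noncomputable def l2 {n : ℕ} (b : Fin n → ℝ) : ℝ := Real.sqrt (∑ j, b j ^ 2)

/-- The Kalton–Peck map `F(b)_j = b_j log(|b_j|/‖b‖₂)`, with `F(b)_j = 0` when `b_j = 0`. -/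
noncomputable def KPF {n : ℕ} (b : Fin n → ℝ) : Fin n → ℝ :=
  fun j => if b j = 0 then 0 else b j * Real.log (|b j| / l2 b)

/-- The Kalton–Peck quasi-norm `‖(a,b)‖ = ‖b‖₂ + ‖a - F(b)‖₂` on `ℝⁿ × ℝⁿ`. -/
noncomputable def znorm {n : ℕ} (x : (Fin n → ℝ) × (Fin n → ℝ)) : ℝ :=
  l2 x.2 + l2 (x.1 - KPF x.2)

/-- Operator "norm" `sup_{x ≠ 0} N_W(T x) / N_V(x)` of a map `T` between spaces
equipped with (quasi-)norms `N_V`, `N_W`. -/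
noncomputable def ratioSup {V W : Type*} [Zero V] (NV : V → ℝ) (NW : W → ℝ) (T : V → W) : ℝ :=
  ⨆ x : {x : V // x ≠ 0}, NW (T x.1) / NV x.1

/-- The supremum norm on `ℝⁿ × ℝⁿ ≅ ℝ^{2n}`: the max of the absolute values of all `2n`
coordinates. -/
noncomputable def linf {n : ℕ} (x : (Fin n → ℝ) × (Fin n → ℝ)) : ℝ :=
  max (⨆ j, |x.1 j|) (⨆ j, |x.2 j|)

lemma key_scalar (N : ℝ) (hN : 2 ≤ N) (t : ℝ) (ht : 0 < t) (ht1 : t ≤ 1) :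
    (t * Real.log t) ^ 2 ≤ 4 * Real.log N ^ 2 * t ^ 2 + 4 / N ^ 2 := by
  have hN0 : (0:ℝ) < N := by linarith
  have hlogN : 0 ≤ Real.log N := Real.log_nonneg (by linarith)
  by_cases hc : 1 / N ^ 2 ≤ t
  · have h1 : Real.log t ≤ 0 := Real.log_nonpos ht.le ht1
    have h2 : Real.log (1 / N ^ 2) ≤ Real.log t := Real.log_le_log (by positivity) hc
    have h3 : Real.log (1 / N ^ 2) = -(2 * Real.log N) := by
      rw [Real.log_div one_ne_zero (by positivity), Real.log_one, Real.log_pow]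
      push_cast; ring
    rw [h3] at h2
    have h4 : Real.log t ^ 2 ≤ (2 * Real.log N) ^ 2 := by nlinarith
    have h5 : (0:ℝ) ≤ 4 / N ^ 2 := by positivity
    nlinarith [sq_nonneg t, mul_le_mul_of_nonneg_right h4 (sq_nonneg t)]
  · push_neg at hc
    have hs : 0 < Real.sqrt t := Real.sqrt_pos.mpr ht
    have h1 : Real.log (1 / Real.sqrt t) ≤ 1 / Real.sqrt t - 1 :=
      Real.log_le_sub_one_of_pos (by positivity)
    have h2 : -Real.log t = 2 * Real.log (1 / Real.sqrt t) := by
      rw [Real.log_div one_ne_zero hs.ne', Real.log_one, Real.log_sqrt ht.le]; ring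
    have h3 : -Real.log t ≤ 2 / Real.sqrt t := by
      rw [h2, one_div] at *
      rw [div_eq_mul_inv]
      have h1' : Real.log (Real.sqrt t)⁻¹ ≤ (Real.sqrt t)⁻¹ - 1 := by
        simpa using h1
      nlinarith [h1']
    have hmm : Real.sqrt t * Real.sqrt t = t := Real.mul_self_sqrt ht.le
    have h4 : t * (-Real.log t) ≤ 2 * Real.sqrt t := by
      calc t * (-Real.log t) ≤ t * (2 / Real.sqrt t) :=
            mul_le_mul_of_nonneg_left h3 ht.le
        _ = 2 * Real.sqrt t := by field_simp; nlinarith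
    have h5 : 0 ≤ t * (-Real.log t) := by
      have := Real.log_nonpos ht.le ht1; nlinarith
    have h6 : (t * Real.log t) ^ 2 ≤ 4 * t := by nlinarith
    have h7 : 4 * t ≤ 4 / N ^ 2 := by
      rw [div_eq_mul_inv, ← one_div]; linarith
    nlinarith [mul_nonneg (mul_nonneg (by norm_num : (0:ℝ) ≤ 4) (sq_nonneg (Real.log N))) (sq_nonneg t)]


lemma l2_nonneg {n : ℕ} (b : Fin n → ℝ) : 0 ≤ l2 b := Real.sqrt_nonneg _

lemma sum_sq_nonneg' {n : ℕ} (b : Fin n → ℝ) : 0 ≤ ∑ j, b j ^ 2 :=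
  Finset.sum_nonneg fun _ _ => sq_nonneg _

lemma sq_l2 {n : ℕ} (b : Fin n → ℝ) : l2 b ^ 2 = ∑ j, b j ^ 2 :=
  Real.sq_sqrt (sum_sq_nonneg' b)

lemma sq_le_l2_sq {n : ℕ} (b : Fin n → ℝ) (j : Fin n) : b j ^ 2 ≤ l2 b ^ 2 := by
  rw [sq_l2]
  exact Finset.single_le_sum (f := fun j => b j ^ 2) (fun i _ => sq_nonneg _) (Finset.mem_univ j)

lemma abs_le_l2 {n : ℕ} (b : Fin n → ℝ) (j : Fin n) : |b j| ≤ l2 b := by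
  have h := sq_le_l2_sq b j
  nlinarith [abs_nonneg (b j), l2_nonneg b, sq_abs (b j)]

lemma l2_eq_norm {n : ℕ} (b : Fin n → ℝ) : l2 b = ‖(WithLp.equiv 2 (Fin n → ℝ)).symm b‖ := by
  rw [EuclideanSpace.norm_eq]; simp [l2, Real.norm_eq_abs, sq_abs]

lemma l2_sub_le {n : ℕ} (a c : Fin n → ℝ) : l2 (a - c) ≤ l2 a + l2 c := by
  rw [l2_eq_norm, l2_eq_norm, l2_eq_norm]
  exact norm_sub_le ((WithLp.equiv 2 (Fin n → ℝ)).symm a) ((WithLp.equiv 2 (Fin n → ℝ)).symm c)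

lemma l2_le_sqrt_mul {n : ℕ} (b : Fin n → ℝ) (M : ℝ) (hM : 0 ≤ M) (h : ∀ j, |b j| ≤ M) :
    l2 b ≤ Real.sqrt n * M := by
  have hsum : ∑ j, b j ^ 2 ≤ (n : ℝ) * M ^ 2 := by
    calc ∑ j, b j ^ 2 ≤ ∑ _j : Fin n, M ^ 2 :=
          Finset.sum_le_sum fun j _ => by nlinarith [h j, abs_nonneg (b j), sq_abs (b j)]
      _ = (n : ℝ) * M ^ 2 := by simp [Finset.sum_const]
  calc l2 b ≤ Real.sqrt ((n : ℝ) * M ^ 2) := Real.sqrt_le_sqrt hsum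
    _ = Real.sqrt n * M := by
        rw [Real.sqrt_mul (Nat.cast_nonneg n), Real.sqrt_sq hM]

lemma l2_eq_zero_iff {n : ℕ} (b : Fin n → ℝ) : l2 b = 0 ↔ b = 0 := by
  constructor
  · intro h
    funext j
    have := abs_le_l2 b j
    rw [h] at this
    simpa using le_antisymm this (abs_nonneg _)
  · rintro rfl
    simp [l2]


lemma l2_KPF_le {n : ℕ} (hn : 2 ≤ n) (b : Fin n → ℝ) :
    l2 (KPF b) ≤ (2 * Real.log n + Real.sqrt 2) * l2 b := by
  have hn2 : (2:ℝ) ≤ (n:ℝ) := by exact_mod_cast hn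
  have hnpos : (0:ℝ) < n := by linarith
  have hlog : 0 ≤ Real.log n := Real.log_nonneg (by linarith)
  by_cases hb : l2 b = 0
  · have hb0 : b = 0 := (l2_eq_zero_iff b).mp hb
    have : KPF b = 0 := by funext j; simp [KPF, hb0]
    rw [this, hb]
    simp [l2]
  · have hbpos : 0 < l2 b := lt_of_le_of_ne (l2_nonneg b) (Ne.symm hb)
    -- termwise bound
    have hterm : ∀ j, (KPF b j) ^ 2 ≤
        4 * Real.log n ^ 2 * b j ^ 2 + (4 / (n:ℝ) ^ 2) * l2 b ^ 2 := by
      intro j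
      by_cases hbj : b j = 0
      · have h0 : KPF b j = 0 := by simp [KPF, hbj]
        rw [h0]
        have : (0:ℝ) ≤ 4 * Real.log n ^ 2 * b j ^ 2 + 4 / (n:ℝ) ^ 2 * l2 b ^ 2 := by positivity
        simpa using this
      · simp only [KPF, if_neg hbj]
        set t : ℝ := |b j| / l2 b with htdef
        have ht0 : 0 < t := div_pos (abs_pos.mpr hbj) hbpos
        have ht1 : t ≤ 1 := (div_le_one hbpos).mpr (abs_le_l2 b j)
        have hkey := key_scalar (n:ℝ) hn2 t ht0 ht1
        have hbj2 : b j ^ 2 = t ^ 2 * l2 b ^ 2 := by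
          rw [htdef, div_pow, sq_abs]
          field_simp
        have : (b j * Real.log t) ^ 2 = l2 b ^ 2 * (t * Real.log t) ^ 2 := by
          rw [mul_pow, mul_pow, hbj2]; ring
        rw [this, hbj2]
        nlinarith [sq_nonneg (l2 b), hkey, mul_le_mul_of_nonneg_left hkey (sq_nonneg (l2 b))]
    have hsum : ∑ j, (KPF b j) ^ 2 ≤ (4 * Real.log n ^ 2 + 4 / n) * l2 b ^ 2 := by
      calc ∑ j, (KPF b j) ^ 2
          ≤ ∑ j, (4 * Real.log n ^ 2 * b j ^ 2 + (4 / (n:ℝ) ^ 2) * l2 b ^ 2) :=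
            Finset.sum_le_sum fun j _ => hterm j
        _ = 4 * Real.log n ^ 2 * (∑ j, b j ^ 2) + (n:ℝ) * ((4 / (n:ℝ) ^ 2) * l2 b ^ 2) := by
            rw [Finset.sum_add_distrib, ← Finset.mul_sum, Finset.sum_const]
            simp
        _ = (4 * Real.log n ^ 2 + 4 / n) * l2 b ^ 2 := by
            rw [← sq_l2]
            field_simp
    have h2 : Real.sqrt 2 ^ 2 = 2 := Real.sq_sqrt (by norm_num)
    have h2n : 4 / (n:ℝ) ≤ 2 := by
      rw [div_le_iff₀ hnpos]; linarith
    have hfin : ∑ j, (KPF b j) ^ 2 ≤ ((2 * Real.log n + Real.sqrt 2) * l2 b) ^ 2 := by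
      have hs2 : 0 ≤ Real.sqrt 2 := Real.sqrt_nonneg 2
      nlinarith [hsum, sq_nonneg (l2 b), mul_nonneg hlog hs2,
        mul_nonneg (mul_nonneg hlog hs2) (sq_nonneg (l2 b))]
    calc l2 (KPF b) ≤ Real.sqrt (((2 * Real.log n + Real.sqrt 2) * l2 b) ^ 2) :=
          Real.sqrt_le_sqrt hfin
      _ = (2 * Real.log n + Real.sqrt 2) * l2 b := by
          rw [Real.sqrt_sq (by positivity)]


section linf_facts
variable {n : ℕ}

lemma abs_le_linf1 [NeZero n] (x : (Fin n → ℝ) × (Fin n → ℝ)) (j : Fin n) :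
    |x.1 j| ≤ linf x :=
  le_trans (le_ciSup (f := fun j => |x.1 j|) (Set.Finite.bddAbove (Set.finite_range _)) j) (le_max_left _ _)

lemma abs_le_linf2 [NeZero n] (x : (Fin n → ℝ) × (Fin n → ℝ)) (j : Fin n) :
    |x.2 j| ≤ linf x :=
  le_trans (le_ciSup (f := fun j => |x.2 j|) (Set.Finite.bddAbove (Set.finite_range _)) j) (le_max_right _ _)

lemma linf_nonneg [NeZero n] (x : (Fin n → ℝ) × (Fin n → ℝ)) : 0 ≤ linf x :=
  le_trans (abs_nonneg _) (abs_le_linf1 x ⟨0, Nat.pos_of_ne_zero (NeZero.ne n)⟩)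

lemma linf_pos [NeZero n] (x : (Fin n → ℝ) × (Fin n → ℝ)) (hx : x ≠ 0) : 0 < linf x := by
  have : x.1 ≠ 0 ∨ x.2 ≠ 0 := by
    by_contra h
    push_neg at h
    exact hx (Prod.ext h.1 h.2)
  rcases this with h | h
  · obtain ⟨j, hj⟩ := Function.ne_iff.mp h
    exact lt_of_lt_of_le (abs_pos.mpr hj) (abs_le_linf1 x j)
  · obtain ⟨j, hj⟩ := Function.ne_iff.mp h
    exact lt_of_lt_of_le (abs_pos.mpr hj) (abs_le_linf2 x j)

end linf_facts

lemma log_lb {n : ℕ} (hn : 2 ≤ n) : (0.69 : ℝ) ≤ Real.log n := by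
  have h2 : (2:ℝ) ≤ (n:ℝ) := by exact_mod_cast hn
  have := Real.log_two_gt_d9
  have hmono : Real.log 2 ≤ Real.log n := Real.log_le_log (by norm_num) h2
  linarith

lemma sqrt2_le : Real.sqrt 2 ≤ 1.5 := by
  rw [show (1.5:ℝ) = Real.sqrt (1.5 ^ 2) from (Real.sqrt_sq (by norm_num)).symm]
  exact Real.sqrt_le_sqrt (by norm_num)

lemma znorm_le {n : ℕ} (hn : 2 ≤ n) (x : (Fin n → ℝ) × (Fin n → ℝ)) :
    znorm x ≤ 8 * Real.sqrt n * Real.log n * linf x := by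
  haveI : NeZero n := ⟨by omega⟩
  set L := linf x with hL
  have hL0 : 0 ≤ L := linf_nonneg x
  have hsq : 0 ≤ Real.sqrt n := Real.sqrt_nonneg _
  have h1 : l2 x.2 ≤ Real.sqrt n * L := l2_le_sqrt_mul _ _ hL0 (abs_le_linf2 x)
  have h2 : l2 x.1 ≤ Real.sqrt n * L := l2_le_sqrt_mul _ _ hL0 (abs_le_linf1 x)
  have h3 : l2 (x.1 - KPF x.2) ≤ l2 x.1 + l2 (KPF x.2) := l2_sub_le _ _
  have h4 : l2 (KPF x.2) ≤ (2 * Real.log n + Real.sqrt 2) * l2 x.2 := l2_KPF_le hn _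
  have hlog : (0.69:ℝ) ≤ Real.log n := log_lb hn
  have h5 : znorm x ≤ (2 + Real.sqrt 2 + 2 * Real.log n) * (Real.sqrt n * L) := by
    have h4' : l2 (KPF x.2) ≤ (2 * Real.log n + Real.sqrt 2) * (Real.sqrt n * L) := by
      calc l2 (KPF x.2) ≤ (2 * Real.log n + Real.sqrt 2) * l2 x.2 := h4
        _ ≤ (2 * Real.log n + Real.sqrt 2) * (Real.sqrt n * L) := by
            apply mul_le_mul_of_nonneg_left h1
            nlinarith [Real.sqrt_nonneg 2]
    unfold znorm
    nlinarith
  have h6 : 2 + Real.sqrt 2 + 2 * Real.log n ≤ 8 * Real.log n := by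
    nlinarith [sqrt2_le]
  calc znorm x ≤ (2 + Real.sqrt 2 + 2 * Real.log n) * (Real.sqrt n * L) := h5
    _ ≤ (8 * Real.log n) * (Real.sqrt n * L) := by
        apply mul_le_mul_of_nonneg_right h6 (by positivity)
    _ = 8 * Real.sqrt n * Real.log n * L := by ring


lemma witness_calc {n : ℕ} (hn : 2 ≤ n) :
    znorm ((0 : Fin n → ℝ), (fun _ => 1 : Fin n → ℝ)) =
      Real.sqrt n + Real.sqrt n * Real.log n / 2 := by
  haveI : NeZero n := ⟨by omega⟩
  have hnpos : (0:ℝ) < n := by positivity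
  have hlog : 0 ≤ Real.log n := Real.log_nonneg (by exact_mod_cast by omega : (1:ℝ) ≤ n)
  have hb : l2 (fun _ => 1 : Fin n → ℝ) = Real.sqrt n := by
    simp [l2]
  have hK : KPF (fun _ => 1 : Fin n → ℝ) = fun _ => -(Real.log n / 2) := by
    funext j
    simp only [KPF, if_neg (one_ne_zero), abs_one]
    rw [hb, Real.log_div one_ne_zero (by positivity : Real.sqrt n ≠ 0), Real.log_one,
      Real.log_sqrt hnpos.le]
    ring
  unfold znorm
  simp only [hK, hb]
  have : ((0 : Fin n → ℝ) - fun _ => -(Real.log n / 2)) = fun _ => Real.log n / 2 := by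
    funext j; simp
  rw [this]
  have : l2 (fun _ => Real.log n / 2 : Fin n → ℝ) = Real.sqrt n * (Real.log n / 2) := by
    unfold l2
    rw [Finset.sum_const, Finset.card_univ, Fintype.card_fin, nsmul_eq_mul,
      Real.sqrt_mul (Nat.cast_nonneg n), Real.sqrt_sq (by positivity)]
  rw [this]
  ring

lemma witness_linf {n : ℕ} (hn : 2 ≤ n) :
    linf ((0 : Fin n → ℝ), (fun _ => 1 : Fin n → ℝ)) = 1 := by
  haveI : NeZero n := ⟨by omega⟩
  unfold linf
  simp [ciSup_const]



/-- The operator norm of the identity `ℓ_∞^{2n} → Z_2^n` is of order `√n · log n`. -/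
theorem linf_to_znorm_opnorm :
    ∃ c₁ : ℝ, 0 < c₁ ∧ ∃ c₂ : ℝ, 0 < c₂ ∧ ∀ n : ℕ, 2 ≤ n →
      c₁ * Real.sqrt n * Real.log n ≤
        ratioSup linf znorm (fun x : (Fin n → ℝ) × (Fin n → ℝ) => x) ∧
      ratioSup linf znorm (fun x : (Fin n → ℝ) × (Fin n → ℝ) => x) ≤
        c₂ * Real.sqrt n * Real.log n := by
  refine ⟨1/2, by norm_num, 8, by norm_num, fun n hn => ?_⟩
  haveI : NeZero n := ⟨by omega⟩
  have hlog : 0 ≤ Real.log n := Real.log_nonneg (by exact_mod_cast by omega : (1:ℝ) ≤ n)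
  have hsq : 0 ≤ Real.sqrt n := Real.sqrt_nonneg _
  set x₀ : (Fin n → ℝ) × (Fin n → ℝ) := ((0 : Fin n → ℝ), (fun _ => 1 : Fin n → ℝ)) with hx₀def
  have hx₀ : x₀ ≠ 0 := by
    intro h
    have := congrFun (congrArg Prod.snd h) ⟨0, by omega⟩
    simp [hx₀def] at this
  haveI : Nonempty {x : (Fin n → ℝ) × (Fin n → ℝ) // x ≠ 0} := ⟨⟨x₀, hx₀⟩⟩
  have hbdd : BddAbove (Set.range fun x : {x : (Fin n → ℝ) × (Fin n → ℝ) // x ≠ 0} =>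
      znorm x.1 / linf x.1) := by
    refine ⟨8 * Real.sqrt n * Real.log n, ?_⟩
    rintro _ ⟨x, rfl⟩
    exact (div_le_iff₀ (linf_pos x.1 x.2)).mpr (znorm_le hn x.1)
  have hrs : ratioSup linf znorm (fun x : (Fin n → ℝ) × (Fin n → ℝ) => x) =
      ⨆ x : {x : (Fin n → ℝ) × (Fin n → ℝ) // x ≠ 0}, znorm x.1 / linf x.1 := rfl
  constructor
  · rw [hrs]
    have hle : (1/2 : ℝ) * Real.sqrt n * Real.log n ≤ znorm x₀ / linf x₀ := by
      rw [witness_calc hn, witness_linf hn]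
      rw [div_one]
      nlinarith
    exact le_trans hle (le_ciSup hbdd ⟨x₀, hx₀⟩)
  · rw [hrs]
    apply ciSup_le
    intro x
    exact (div_le_iff₀ (linf_pos x.1 x.2)).mpr (znorm_le hn x.1)
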